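/- Let W = (W̄, −Id)ᵀ ∈ ℤ^{(m+n)×n} (the rows of W̄ ∈ ℤ^{m×n} followed by the rows of minus the n×n identity matrix) be such that the positive hull of the rows of W is ℝ^n, and let Ψ = {u = (ū, 0) ∈ ℤ^{m+n} : ū ∈ ℤ^m}. Let M ⊆ Ψ be the monoid generated by finitely many vectors m₁,…,m_t and let Λ_M be the lattice generated by m₁,…,m_t. Assume W·ℤ^n_{≥0} ∩ Λ_M ⊆ M. Then there are only finitely many polytopes P_u, u ∈ M, that are integrally indecomposable with respect to M. -/

import Mathlib

set_option synthInstance.maxHeartbeats 1000000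
set_option maxHeartbeats 1000000
set_option linter.unusedSectionVars false

open Pointwise

/-- The polytope `P_u = {y ∈ ℝ^n : Wy ≤ u}` for an integral matrix `W` and an integral
right-hand side `u`. -/
def polyOf {ι : Type*} [Fintype ι] {n : ℕ} (W : Matrix ι (Fin n) ℤ) (u : ι → ℤ) :
    Set (Fin n → ℝ) :=
  {y | ∀ i, ∑ j, (W i j : ℝ) * y j ≤ (u i : ℝ)}

open Pointwise Matrix Module Submodule

section Poly
variable {n : ℕ} {ι : Type*} [Fintype ι] [DecidableEq ι]

/-- the polyhedron -/
def Pset (V : Matrix ι (Fin n) ℝ) (c : ι → ℝ) : Set (Fin n → ℝ) :=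
  {y | ∀ i, V.mulVec y i ≤ c i}

/-- basic point associated to a "basis" b -/
noncomputable def xb (V : Matrix ι (Fin n) ℝ) (b : Fin n → ι) (c : ι → ℝ) : Fin n → ℝ :=
  (V.submatrix b id)⁻¹.mulVec (c ∘ b)

/-- feasible bases -/
def feasB (V : Matrix ι (Fin n) ℝ) (b : Fin n → ι) (c : ι → ℝ) : Prop :=
  IsUnit (V.submatrix b id).det ∧ xb V b c ∈ Pset V c

/-- basic feasible points -/
def Vset (V : Matrix ι (Fin n) ℝ) (c : ι → ℝ) : Set (Fin n → ℝ) :=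
  {x | ∃ b : Fin n → ι, feasB V b c ∧ x = xb V b c}

theorem convex_Pset (V : Matrix ι (Fin n) ℝ) (c : ι → ℝ) : Convex ℝ (Pset V c) := by
  intro y hy z hz a b ha hb hab
  intro i
  have := hy i; have := hz i
  simp only [Matrix.mulVec_add, Matrix.mulVec_smul] at *
  calc a • V.mulVec y i + b • V.mulVec z i ≤ a • c i + b • c i := by
        apply add_le_add <;> [exact smul_le_smul_of_nonneg_left (hy i) ha;
          exact smul_le_smul_of_nonneg_left (hz i) hb]
    _ = c i := by rw [smul_eq_mul, smul_eq_mul, ← add_mul, hab, one_mul]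

theorem add_subset_Pset (V : Matrix ι (Fin n) ℝ) (c c' : ι → ℝ) :
    Pset V c + Pset V c' ⊆ Pset V (c + c') := by
  rintro x ⟨y, hy, z, hz, rfl⟩ i
  have : V.mulVec (y + z) i = V.mulVec y i + V.mulVec z i := by
    rw [Matrix.mulVec_add]; rfl
  rw [this]; exact add_le_add (hy i) (hz i)

end Poly

set_option linter.unusedSectionVars false

section Vertex
variable {n : ℕ} {ι : Type*} [Fintype ι] [DecidableEq ι]

theorem mem_Vset_of_span_top (V : Matrix ι (Fin n) ℝ) (c : ι → ℝ) (y : Fin n → ℝ)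
    (hy : y ∈ Pset V c)
    (htop : span ℝ ((fun i => V i) '' {i | V.mulVec y i = c i}) = ⊤) : y ∈ Vset V c := by
  classical
  set T := {i | V.mulVec y i = c i} with hT
  obtain ⟨bs, hsub, hspan, hli⟩ := exists_linearIndependent ℝ ((fun i => V i) '' T)
  rw [htop] at hspan
  have hfin : bs.Finite := ((Set.toFinite T).image _).subset hsub
  haveI : Fintype bs := hfin.fintype
  have B : Basis bs ℝ (Fin n → ℝ) := Basis.mk hli (by rw [Subtype.range_coe, hspan])
  have hcard : Fintype.card bs = n := by
    have := Module.finrank_eq_card_basis B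
    rw [Module.finrank_fintype_fun_eq_card, Fintype.card_fin] at this
    exact this.symm
  have e : Fin n ≃ bs := (Fintype.equivFinOfCardEq hcard).symm
  have hchoice : ∀ k : Fin n, ∃ i, i ∈ T ∧ V i = (e k : Fin n → ℝ) := by
    intro k
    obtain ⟨i, hi, hvi⟩ := hsub (e k).2
    exact ⟨i, hi, hvi⟩
  choose b hbT hbV using hchoice
  have hrows : (fun k => V.submatrix b id k) = (fun k => ((e k : Fin n → ℝ))) := by
    funext k; exact hbV k
  have hliB : LinearIndependent ℝ (fun k => V.submatrix b id k) := by
    rw [hrows]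
    exact hli.comp (fun k => e k) (fun a b hab => e.injective hab)
  have hunit : IsUnit (V.submatrix b id).det := by
    rw [← Matrix.isUnit_iff_isUnit_det]
    exact Matrix.linearIndependent_rows_iff_isUnit.mp hliB
  have htight : (V.submatrix b id).mulVec y = c ∘ b := by
    funext k
    have : (V.submatrix b id).mulVec y k = V.mulVec y (b k) := by
      simp [Matrix.mulVec, dotProduct, Matrix.submatrix_apply]
    rw [this]; exact (hbT k)
  have hxy : xb V b c = y := by
    unfold xb
    rw [← htight, Matrix.mulVec_mulVec, Matrix.nonsing_inv_mul _ hunit, Matrix.one_mulVec]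
  exact ⟨b, ⟨hunit, by rw [hxy]; exact hy⟩, hxy.symm⟩

end Vertex

section Hull
variable {n : ℕ} {ι : Type*} [Fintype ι] [DecidableEq ι]

theorem step_lemma (V : Matrix ι (Fin n) ℝ) (c : ι → ℝ) (y : Fin n → ℝ)
    (hy : y ∈ Pset V c) (d : Fin n → ℝ)
    (hdT : ∀ i, V.mulVec y i = c i → V.mulVec d i = 0)
    (hex : ∃ i, 0 < V.mulVec d i) :
    ∃ t : ℝ, 0 < t ∧ (y + t • d) ∈ Pset V c ∧
      ∃ i', V.mulVec (y + t • d) i' = c i' ∧ 0 < V.mulVec d i' := by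
  classical
  set I : Finset ι := Finset.univ.filter (fun i => 0 < V.mulVec d i) with hI
  have hInonempty : I.Nonempty := by
    obtain ⟨i, hi⟩ := hex
    exact ⟨i, by simp [hI, hi]⟩
  obtain ⟨ip, hip, hipmin⟩ :=
    Finset.exists_min_image I (fun i => (c i - V.mulVec y i) / V.mulVec d i) hInonempty
  have hipd : 0 < V.mulVec d ip := by simpa [hI] using hip
  set t := (c ip - V.mulVec y ip) / V.mulVec d ip with ht
  have hiptight : ip ∉ {i | V.mulVec y i = c i} := by
    intro h
    have := hdT ip h
    rw [this] at hipd; exact lt_irrefl _ hipd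
  have hipstrict : V.mulVec y ip < c ip := lt_of_le_of_ne (hy ip) (fun h => hiptight h)
  have htpos : 0 < t := div_pos (by linarith) hipd
  have hmv : ∀ i, V.mulVec (y + t • d) i = V.mulVec y i + t * V.mulVec d i := by
    intro i
    rw [Matrix.mulVec_add, Matrix.mulVec_smul]
    rfl
  refine ⟨t, htpos, ?_, ip, ?_, hipd⟩
  · intro i
    rw [hmv i]
    rcases le_or_gt (V.mulVec d i) 0 with h | h
    · have : t * V.mulVec d i ≤ 0 := mul_nonpos_of_nonneg_of_nonpos htpos.le h
      linarith [hy i]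
    · have hiI : i ∈ I := by simp [hI, h]
      have := hipmin i hiI
      have h2 : t * V.mulVec d i ≤ c i - V.mulVec y i := by
        rw [ ← le_div_iff₀ h ]; exact this
      linarith
  · rw [hmv ip, ht, div_mul_cancel₀]
    · ring
    · exact ne_of_gt hipd

end Hull

section Main
variable {n : ℕ} {ι : Type*} [Fintype ι] [DecidableEq ι]

theorem mem_hull_aux (V : Matrix ι (Fin n) ℝ)
    (hV : ∀ d : Fin n → ℝ, (∀ i, V.mulVec d i ≤ 0) → d = 0) :
    ∀ (k : ℕ) (c : ι → ℝ) (y : Fin n → ℝ), y ∈ Pset V c →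
      n ≤ k + Module.finrank ℝ (span ℝ ((fun i => V i) '' {i | V.mulVec y i = c i})) →
      y ∈ convexHull ℝ (Vset V c) := by
  intro k
  induction k with
  | zero =>
    intro c y hy hrank
    apply subset_convexHull
    apply mem_Vset_of_span_top V c y hy
    apply Submodule.eq_top_of_finrank_eq
    have h1 : Module.finrank ℝ (span ℝ ((fun i => V i) '' {i | V.mulVec y i = c i}))
        ≤ Module.finrank ℝ (Fin n → ℝ) := Submodule.finrank_le _
    have h2 : Module.finrank ℝ (Fin n → ℝ) = n := by
      rw [Module.finrank_fintype_fun_eq_card, Fintype.card_fin]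
    omega
  | succ k ih =>
    intro c y hy hrank
    set T := {i | V.mulVec y i = c i} with hTdef
    set S := span ℝ ((fun i => V i) '' T) with hSdef
    by_cases htop : S = ⊤
    · exact subset_convexHull ℝ _ (mem_Vset_of_span_top V c y hy htop)
    -- find d ≠ 0 orthogonal to the tight rows
    have hfree : Module.Free ℝ ((Fin n → ℝ) ⧸ S) := Module.Free.of_divisionRing ℝ ((Fin n → ℝ) ⧸ S)
    obtain ⟨f, hf0, hfmap⟩ :=
      Submodule.exists_dual_map_eq_bot_of_lt_top (lt_top_iff_ne_top.mpr htop) (by haveI := hfree; infer_instance)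
    set d : Fin n → ℝ := fun j => f (Pi.single j 1) with hddef
    have hfd : ∀ z : Fin n → ℝ, f z = ∑ j, z j * d j := by
      intro z
      have hz : z = ∑ j, z j • (Pi.single j (1:ℝ) : Fin n → ℝ) := by
        funext i
        rw [Finset.sum_apply]
        simp [Pi.single_apply]
      conv_lhs => rw [hz]
      rw [map_sum]
      congr 1
      funext j
      rw [LinearMap.map_smul, smul_eq_mul]
    have hd0 : d ≠ 0 := by
      intro h
      apply hf0
      apply LinearMap.ext
      intro z
      rw [hfd z, h]
      simp
    have hST : ∀ s ∈ S, f s = 0 := by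
      intro s hs
      have : f s ∈ Submodule.map f S := Submodule.mem_map_of_mem hs
      rw [hfmap] at this
      simpa using this
    have hdT : ∀ i, V.mulVec y i = c i → V.mulVec d i = 0 := by
      intro i hi
      have hmem : (V i : Fin n → ℝ) ∈ S := by
        apply subset_span
        exact ⟨i, hi, rfl⟩
      have := hST _ hmem
      rw [hfd] at this
      simpa [Matrix.mulVec, dotProduct] using this
    have hfrow : ∀ i, f (V i) = V.mulVec d i := by
      intro i
      rw [hfd]
      simp [Matrix.mulVec, dotProduct]
    have hexp : ∃ i, 0 < V.mulVec d i := by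
      by_contra h
      push_neg at h
      exact hd0 (hV d fun i => (h i))
    have hexm : ∃ i, 0 < V.mulVec (-d) i := by
      by_contra h
      push_neg at h
      apply hd0
      have : -d = 0 := hV (-d) fun i => h i
      simpa [neg_eq_zero] using this
    have hdTm : ∀ i, V.mulVec y i = c i → V.mulVec (-d) i = 0 := by
      intro i hi
      rw [Matrix.mulVec_neg, Pi.neg_apply, hdT i hi, neg_zero]
    obtain ⟨tp, htp, hyp, ip, hiptight, hipd⟩ := step_lemma V c y hy d hdT hexp
    obtain ⟨tm, htm, hym, im, himtight, himd⟩ := step_lemma V c y hy (-d) hdTm hexm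
    -- rank increase for both new points
    have keyrank : ∀ (y' : Fin n → ℝ) (i' : ι), y' ∈ Pset V c →
        (∀ i ∈ T, V.mulVec y' i = c i) → V.mulVec y' i' = c i' →
        f (V i') ≠ 0 → y' ∈ convexHull ℝ (Vset V c) := by
      intro y' i' hy' hTsub htight' hfne
      apply ih c y' hy'
      set S' := span ℝ ((fun i => V i) '' {i | V.mulVec y' i = c i}) with hS'def
      have hSS' : S ≤ S' := by
        apply span_mono
        apply Set.image_mono
        intro i hi
        exact hTsub i hi
      have hi'S' : (V i' : Fin n → ℝ) ∈ S' := subset_span ⟨i', htight', rfl⟩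
      have hi'S : (V i' : Fin n → ℝ) ∉ S := fun h => hfne (hST _ h)
      have hlt : S < S' := lt_of_le_of_ne hSS' (fun h => hi'S (h ▸ hi'S'))
      have := Submodule.finrank_lt_finrank_of_lt hlt
      omega
    have hypmem : (y + tp • d) ∈ convexHull ℝ (Vset V c) := by
      apply keyrank _ ip hyp _ hiptight
      · rw [hfrow]; exact ne_of_gt hipd
      · intro i hi
        have hmv : V.mulVec (y + tp • d) i = V.mulVec y i + tp * V.mulVec d i := by
          rw [Matrix.mulVec_add, Matrix.mulVec_smul]; rfl
        rw [hmv, hdT i hi, mul_zero, add_zero]; exact hi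
    have hymmem : (y + tm • (-d)) ∈ convexHull ℝ (Vset V c) := by
      apply keyrank _ im hym _ himtight
      · rw [hfrow]
        have : V.mulVec (-d) im = -V.mulVec d im := by
          rw [Matrix.mulVec_neg]; rfl
        rw [this] at himd
        intro h; rw [h] at himd; simpa using himd
      · intro i hi
        have hmv : V.mulVec (y + tm • (-d)) i = V.mulVec y i + tm * V.mulVec (-d) i := by
          rw [Matrix.mulVec_add, Matrix.mulVec_smul]; rfl
        rw [hmv, hdTm i hi, mul_zero, add_zero]; exact hi
    -- convex combination
    have hsum : 0 < tp + tm := by linarith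
    have hcomb : (tm / (tp + tm)) • (y + tp • d) + (tp / (tp + tm)) • (y + tm • (-d)) = y := by
      have h1 : tm / (tp + tm) + tp / (tp + tm) = 1 := by
        field_simp
        ring
      match_scalars
      · field_simp
        try ring
      · field_simp
        try ring
    rw [← hcomb]
    exact (convex_convexHull ℝ (Vset V c)) hypmem hymmem
      (div_nonneg htm.le hsum.le) (div_nonneg htp.le hsum.le)
      (by field_simp; ring)

theorem mem_hull_Vset (V : Matrix ι (Fin n) ℝ)
    (hV : ∀ d : Fin n → ℝ, (∀ i, V.mulVec d i ≤ 0) → d = 0)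
    (c : ι → ℝ) (y : Fin n → ℝ) (hy : y ∈ Pset V c) : y ∈ convexHull ℝ (Vset V c) :=
  mem_hull_aux V hV n c y hy (Nat.le_add_right _ _)

end Main

section Decomp
variable {n : ℕ} {ι : Type*} [Fintype ι] [DecidableEq ι]

theorem Pset_decomp (V : Matrix ι (Fin n) ℝ)
    (hV : ∀ d : Fin n → ℝ, (∀ i, V.mulVec d i ≤ 0) → d = 0) (c c' : ι → ℝ)
    (h : ∀ b : Fin n → ι, feasB V b (c + c') →
      (xb V b c ∈ Pset V c ∧ xb V b c' ∈ Pset V c')) :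
    Pset V (c + c') = Pset V c + Pset V c' := by
  apply Set.Subset.antisymm
  · intro y hy
    have hmem := mem_hull_Vset V hV (c + c') y hy
    have hsub : Vset V (c + c') ⊆ Pset V c + Pset V c' := by
      rintro x ⟨b, hb, rfl⟩
      obtain ⟨h1, h2⟩ := h b hb
      have hx : xb V b (c + c') = xb V b c + xb V b c' := by
        unfold xb
        rw [show ((c + c') ∘ b) = c ∘ b + c' ∘ b from rfl, Matrix.mulVec_add]
      rw [hx]
      exact Set.add_mem_add h1 h2
    exact convexHull_min hsub ((convex_Pset V c).add (convex_Pset V c')) hmem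
  · exact add_subset_Pset V c c'

end Decomp

section Dickson

theorem nat_mono_subseq (f : ℕ → ℕ) : ∃ g : ℕ ↪o ℕ, Monotone (f ∘ g) := by
  have hwf : (Set.univ : Set ℕ).IsWF := Set.isWF_univ_iff.mpr inferInstance
  exact hwf.isPWO.exists_monotone_subseq (f := f) (fun n => Set.mem_univ _)

theorem dickson_fin : ∀ (s : ℕ) (g : ℕ → Fin s → ℕ),
    ∃ φ : ℕ → ℕ, StrictMono φ ∧ ∀ i j, i ≤ j → ∀ l, g (φ i) l ≤ g (φ j) l := by
  intro s
  induction s with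
  | zero => exact fun g => ⟨id, strictMono_id, fun i j _ l => l.elim0⟩
  | succ s ih =>
    intro g
    obtain ⟨φ₁, hφ₁, hmono₁⟩ := ih (fun k l => g k l.castSucc)
    obtain ⟨φ₂, hφ₂⟩ := nat_mono_subseq (fun i => g (φ₁ i) (Fin.last s))
    refine ⟨φ₁ ∘ φ₂, hφ₁.comp φ₂.strictMono, ?_⟩
    intro i j hij l
    refine Fin.lastCases ?_ ?_ l
    · exact hφ₂ hij
    · intro l'
      exact hmono₁ (φ₂ i) (φ₂ j) (φ₂.monotone hij) l'

theorem dickson {κ : Type*} [Fintype κ] (g : ℕ → κ → ℕ) :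
    ∃ i j : ℕ, i < j ∧ ∀ l, g i l ≤ g j l := by
  classical
  obtain ⟨e⟩ : Nonempty (κ ≃ Fin (Fintype.card κ)) := ⟨Fintype.equivFin κ⟩
  obtain ⟨φ, hφ, hmono⟩ := dickson_fin (Fintype.card κ) (fun k l => g k (e.symm l))
  refine ⟨φ 0, φ 1, hφ (by norm_num), fun l => ?_⟩
  have := hmono 0 1 (by norm_num) (e l)
  simpa using this

end Dickson

section IntLayer
variable {n : ℕ} {ι : Type*} [Fintype ι] [DecidableEq ι]

/-- real matrix associated to an integer matrix -/
def Vr (W : Matrix ι (Fin n) ℤ) : Matrix ι (Fin n) ℝ := W.map (Int.cast)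

/-- integer linear functional measuring feasibility of the basic point of `b` w.r.t. row `i`. -/
def Lint (W : Matrix ι (Fin n) ℤ) (b : Fin n → ι) (i : ι) (u : ι → ℤ) : ℤ :=
  (W.submatrix b id).det * (W.mulVec ((W.submatrix b id).adjugate.mulVec (u ∘ b))) i
    - ((W.submatrix b id).det) ^ 2 * u i

theorem Lint_add (W : Matrix ι (Fin n) ℤ) (b : Fin n → ι) (i : ι) (u v : ι → ℤ) :
    Lint W b i (u + v) = Lint W b i u + Lint W b i v := by
  unfold Lint
  rw [show ((u + v) ∘ b) = u ∘ b + v ∘ b from rfl, Matrix.mulVec_add, Matrix.mulVec_add]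
  simp only [Pi.add_apply]
  ring

theorem castMV {k : Type*} [Fintype k] (M : Matrix ι k ℤ) (v : k → ℤ) (i : ι) :
    ((M.mulVec v i : ℤ) : ℝ) = (M.map (Int.cast)).mulVec (fun j => ((v j : ℤ) : ℝ)) i := by
  simp only [Matrix.mulVec, dotProduct, Matrix.map_apply]
  push_cast
  rfl

theorem castMVfin (M : Matrix (Fin n) (Fin n) ℤ) (v : Fin n → ℤ) (i : Fin n) :
    ((M.mulVec v i : ℤ) : ℝ) = (M.map (Int.cast)).mulVec (fun j => ((v j : ℤ) : ℝ)) i := by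
  simp only [Matrix.mulVec, dotProduct, Matrix.map_apply]
  push_cast
  rfl

theorem submatrix_Vr (W : Matrix ι (Fin n) ℤ) (b : Fin n → ι) :
    (Vr W).submatrix b id = (W.submatrix b id).map (Int.cast) := by
  rw [Vr, Matrix.submatrix_map]

theorem det_submatrix_Vr (W : Matrix ι (Fin n) ℤ) (b : Fin n → ι) :
    ((Vr W).submatrix b id).det = (((W.submatrix b id).det : ℤ) : ℝ) := by
  rw [submatrix_Vr]
  exact ((Int.castRingHom ℝ).map_det _).symm

theorem Lint_cast (W : Matrix ι (Fin n) ℤ) (b : Fin n → ι) (i : ι)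
    (hdet : ((W.submatrix b id).det : ℤ) ≠ 0) (u : ι → ℤ) :
    ((Lint W b i u : ℤ) : ℝ) = (((W.submatrix b id).det : ℤ) : ℝ) ^ 2 *
      ((Vr W).mulVec (xb (Vr W) b (fun i' => ((u i' : ℤ) : ℝ))) i - ((u i : ℤ) : ℝ)) := by
  set Δ : ℝ := (((W.submatrix b id).det : ℤ) : ℝ) with hΔ
  have hΔne : Δ ≠ 0 := by
    rw [hΔ]; exact_mod_cast hdet
  -- unfold the basic point
  have hxb : xb (Vr W) b (fun i' => ((u i' : ℤ) : ℝ)) =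
      Δ⁻¹ • (((W.submatrix b id).adjugate.map (Int.cast)).mulVec
        (fun k => ((u (b k) : ℤ) : ℝ))) := by
    unfold xb
    rw [Matrix.inv_def, det_submatrix_Vr, Ring.inverse_eq_inv, Matrix.smul_mulVec,
      submatrix_Vr]
    have hadj : ((W.submatrix b id).map (Int.cast : ℤ → ℝ)).adjugate
        = (W.submatrix b id).adjugate.map (Int.cast : ℤ → ℝ) := by
      have := (Int.castRingHom ℝ).map_adjugate (W.submatrix b id)
      calc ((W.submatrix b id).map (Int.cast : ℤ → ℝ)).adjugate
          = ((Int.castRingHom ℝ).mapMatrix (W.submatrix b id)).adjugate := rfl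
        _ = (Int.castRingHom ℝ).mapMatrix (W.submatrix b id).adjugate := this.symm
        _ = (W.submatrix b id).adjugate.map (Int.cast) := rfl
    rw [hadj]
    rfl
  rw [hxb]
  rw [Matrix.mulVec_smul]
  -- cast the integer computation
  have hz : ((W.mulVec ((W.submatrix b id).adjugate.mulVec (u ∘ b)) i : ℤ) : ℝ)
      = (Vr W).mulVec (((W.submatrix b id).adjugate.map (Int.cast)).mulVec
          (fun k => ((u (b k) : ℤ) : ℝ))) i := by
    rw [castMV]
    congr 1
    funext j
    rw [castMVfin]
    rfl
  unfold Lint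
  push_cast [hz]
  rw [show ((W.submatrix b id).map (fun x => (x:ℝ))).det = Δ from
    ((Int.castRingHom ℝ).map_det _).symm]
  rw [Pi.smul_apply, smul_eq_mul]
  field_simp
end IntLayer

section E1
variable {n : ℕ} {ι : Type*} [Fintype ι] [DecidableEq ι]

theorem isUnit_det_Vr_iff (W : Matrix ι (Fin n) ℤ) (b : Fin n → ι) :
    IsUnit ((Vr W).submatrix b id).det ↔ (W.submatrix b id).det ≠ 0 := by
  rw [det_submatrix_Vr, isUnit_iff_ne_zero, ne_eq, Int.cast_eq_zero]

theorem feas_iff_Lint (W : Matrix ι (Fin n) ℤ) (b : Fin n → ι)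
    (hdet : (W.submatrix b id).det ≠ 0) (u : ι → ℤ) :
    xb (Vr W) b (fun i => ((u i : ℤ) : ℝ)) ∈ Pset (Vr W) (fun i => ((u i : ℤ) : ℝ)) ↔
      ∀ i, Lint W b i u ≤ 0 := by
  have hΔne : (((W.submatrix b id).det : ℤ) : ℝ) ≠ 0 := by
    exact_mod_cast hdet
  have hΔpos : (0:ℝ) < (((W.submatrix b id).det : ℤ) : ℝ) ^ 2 :=
    pow_two_pos_of_ne_zero hΔne
  constructor
  · intro h i
    have h2 := h i
    have hcast : ((Lint W b i u : ℤ) : ℝ) ≤ 0 := by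
      rw [Lint_cast W b i hdet u]
      apply mul_nonpos_of_nonneg_of_nonpos hΔpos.le
      linarith
    exact_mod_cast hcast
  · intro h i
    have hcast : ((Lint W b i u : ℤ) : ℝ) ≤ 0 := by exact_mod_cast h i
    rw [Lint_cast W b i hdet u] at hcast
    nlinarith [hcast, hΔpos]

theorem mem_closure_iff_rep {t : ℕ} {G : Type*} [AddCommMonoid G] (ms : Fin t → G) (u : G) :
    u ∈ AddSubmonoid.closure (Set.range ms) ↔ ∃ a : Fin t → ℕ, u = ∑ j, a j • ms j := by
  constructor
  · intro hu
    induction hu using AddSubmonoid.closure_induction with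
    | mem x hx =>
      obtain ⟨j, rfl⟩ := hx
      refine ⟨Pi.single j 1, ?_⟩
      rw [Finset.sum_eq_single j]
      · simp
      · intro l _ hl
        simp [Pi.single_eq_of_ne hl]
      · intro hj; exact absurd (Finset.mem_univ j) hj
    | zero => exact ⟨0, by simp⟩
    | add x y _ _ hx hy =>
      obtain ⟨ax, rfl⟩ := hx
      obtain ⟨ay, rfl⟩ := hy
      refine ⟨ax + ay, ?_⟩
      rw [← Finset.sum_add_distrib]
      congr 1
      funext l
      rw [Pi.add_apply, add_smul]
  · rintro ⟨a, rfl⟩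
    exact AddSubmonoid.sum_mem _ fun j _ =>
      AddSubmonoid.nsmul_mem _ (AddSubmonoid.subset_closure (Set.mem_range_self j)) _

end E1

section Bridge
variable {n : ℕ} {ι : Type*} [Fintype ι] [DecidableEq ι]

theorem polyOf_eq_Pset (W : Matrix ι (Fin n) ℤ) (u : ι → ℤ) :
    {y : Fin n → ℝ | ∀ i, ∑ j, (W i j : ℝ) * y j ≤ (u i : ℝ)}
      = Pset (Vr W) (fun i => ((u i : ℤ) : ℝ)) := rfl

theorem hV_of_hpos (W : Matrix ι (Fin n) ℤ)
    (hpos : ∀ x : Fin n → ℝ, ∃ μ : ι → ℝ, (∀ i, 0 ≤ μ i) ∧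
      x = ∑ i, μ i • (fun j => ((W i j : ℤ) : ℝ))) :
    ∀ d : Fin n → ℝ, (∀ i, (Vr W).mulVec d i ≤ 0) → d = 0 := by
  intro d hd
  obtain ⟨μ, hμ, hx⟩ := hpos d
  have key : ∑ k, d k * d k ≤ 0 := by
    calc ∑ k, d k * d k
        = ∑ k, ((∑ i, μ i • (fun j => ((W i j : ℤ) : ℝ))) k) * d k := by rw [← hx]
      _ = ∑ k, ∑ i, μ i * ((W i k : ℤ) : ℝ) * d k := by
          apply Finset.sum_congr rfl
          intro k _
          rw [Finset.sum_apply, Finset.sum_mul]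
          apply Finset.sum_congr rfl
          intro i _
          simp [smul_eq_mul]
      _ = ∑ i, ∑ k, μ i * ((W i k : ℤ) : ℝ) * d k := Finset.sum_comm
      _ = ∑ i, μ i * (Vr W).mulVec d i := by
          apply Finset.sum_congr rfl
          intro i _
          rw [Matrix.mulVec, dotProduct, Finset.mul_sum]
          apply Finset.sum_congr rfl
          intro k _
          rw [Vr, Matrix.map_apply]
          ring
      _ ≤ 0 := Finset.sum_nonpos fun i _ => mul_nonpos_of_nonneg_of_nonpos (hμ i) (hd i)
  have key2 : ∑ k, d k * d k = 0 :=
    le_antisymm key (Finset.sum_nonneg fun k _ => mul_self_nonneg _)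
  funext k
  have := (Finset.sum_eq_zero_iff_of_nonneg (fun k _ => mul_self_nonneg (d k))).mp key2
    k (Finset.mem_univ k)
  exact mul_self_eq_zero.mp this

end Bridge

/-- For `W = (W̄, −Id)ᵀ` with positively spanning rows, a finitely generated monoid
`M ⊆ Ψ = ℤ^m × {0}` generated by `m₁, …, m_t` with lattice `Λ_M`, the assumption
`W·ℤ^n_{≥0} ∩ Λ_M ⊆ M` implies that there are only finitely many polytopes `P_u`,
`u ∈ M`, that are integrally indecomposable with respect to `M`. -/
theorem finitely_many_indecomposable_polytopes_wrt_monoid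
    {m n t : ℕ} (Wbar : Matrix (Fin m) (Fin n) ℤ)
    -- generators m₁, …, m_t of the monoid M, lying in Ψ (last n coordinates vanish)
    (ms : Fin t → (Fin m ⊕ Fin n → ℤ))
    (hms : ∀ j i, ms j (Sum.inr i) = 0)
    -- the rows of W = (W̄, −Id)ᵀ positively span ℝ^n
    (hpos : ∀ x : Fin n → ℝ, ∃ μ : Fin m ⊕ Fin n → ℝ, (∀ i, 0 ≤ μ i) ∧
      x = ∑ i, μ i • (fun j => ((Matrix.fromRows Wbar (-1) : Matrix (Fin m ⊕ Fin n) (Fin n) ℤ) i j : ℝ)))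
    -- W·ℤ^n_{≥0} ∩ Λ_M ⊆ M
    (hWM : ∀ z : Fin n → ℤ, 0 ≤ z →
      (Matrix.fromRows Wbar (-1)).mulVec z ∈ AddSubgroup.closure (Set.range ms) →
      (Matrix.fromRows Wbar (-1)).mulVec z ∈ AddSubmonoid.closure (Set.range ms)) :
    Set.Finite {P : Set (Fin n → ℝ) | ∃ u : Fin m ⊕ Fin n → ℤ,
      u ∈ AddSubmonoid.closure (Set.range ms) ∧
      (¬ ∃ u₁ u₂ : Fin m ⊕ Fin n → ℤ,
        u₁ ∈ AddSubmonoid.closure (Set.range ms) ∧ u₂ ∈ AddSubmonoid.closure (Set.range ms) ∧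
        u₁ ≠ 0 ∧ u₂ ≠ 0 ∧ u = u₁ + u₂ ∧
        polyOf (Matrix.fromRows Wbar (-1)) u =
          polyOf (Matrix.fromRows Wbar (-1)) u₁ + polyOf (Matrix.fromRows Wbar (-1)) u₂) ∧
      P = polyOf (Matrix.fromRows Wbar (-1)) u} := by
  classical
  set W : Matrix (Fin m ⊕ Fin n) (Fin n) ℤ := Matrix.fromRows Wbar (-1) with hWdef
  set M := AddSubmonoid.closure (Set.range ms) with hMdef
  -- positive spanning in the form we need
  have hV : ∀ d : Fin n → ℝ, (∀ i, (Vr W).mulVec d i ≤ 0) → d = 0 :=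
    hV_of_hpos W hpos
  by_contra hfin
  replace hfin : Set.Infinite _ := hfin
  have f : ℕ ↪ _ := hfin.natEmbedding
  have hu : ∀ k : ℕ, ∃ u : Fin m ⊕ Fin n → ℤ,
      u ∈ M ∧
      (¬ ∃ u₁ u₂ : Fin m ⊕ Fin n → ℤ, u₁ ∈ M ∧ u₂ ∈ M ∧
        u₁ ≠ 0 ∧ u₂ ≠ 0 ∧ u = u₁ + u₂ ∧
        polyOf W u = polyOf W u₁ + polyOf W u₂) ∧
      (f k : Set (Fin n → ℝ)) = polyOf W u := fun k => (f k).2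
  choose u humem huind hupoly using hu
  have huinj : Function.Injective u := by
    intro k k' h
    have : (f k : Set (Fin n → ℝ)) = (f k' : Set (Fin n → ℝ)) := by
      rw [hupoly k, hupoly k', h]
    have := f.injective (Subtype.ext this)
    exact this
  choose a ha using fun k => (mem_closure_iff_rep ms (u k)).mp (humem k)
  -- sign classes
  set σ : ℕ → ((Fin n → (Fin m ⊕ Fin n)) × (Fin m ⊕ Fin n)) → Bool :=
    fun k p => decide (Lint W p.1 p.2 (u k) ≤ 0) with hσdef
  obtain ⟨s, hs⟩ := Finite.exists_infinite_fiber σ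
  have hsetinf : (σ ⁻¹' {s} \ {k | u k = 0}).Infinite := by
    apply Set.Infinite.diff (Set.infinite_coe_iff.mp hs)
    have hss : {k | u k = 0}.Subsingleton := fun k hk k' hk' => huinj (hk.trans hk'.symm)
    exact hss.finite
  set g : ℕ ↪ ↥(σ ⁻¹' {s} \ {k | u k = 0}) := hsetinf.natEmbedding with hgdef
  -- Dickson
  set G : ℕ → ((Fin t) ⊕ ((Fin n → (Fin m ⊕ Fin n)) × (Fin m ⊕ Fin n))) → ℕ :=
    fun r => Sum.elim (a (g r : ℕ))
      (fun p => (- Lint W p.1 p.2 (u (g r : ℕ))).toNat) with hGdef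
  obtain ⟨r1, r2, hr12, hle⟩ := dickson G
  set j : ℕ := (g r1 : ℕ) with hjdef
  set k : ℕ := (g r2 : ℕ) with hkdef
  have hjprop := (g r1).2
  have hkprop := (g r2).2
  have hσj : σ j = s := hjprop.1
  have hσk : σ k = s := hkprop.1
  have hjne0 : u j ≠ 0 := hjprop.2
  have hjk : j ≠ k := by
    intro h
    exact absurd (Subtype.ext h) (fun hh => (by omega : r1 ≠ r2) (g.injective hh))
  have hujk : u j ≠ u k := fun h => hjk (huinj h)
  have hale : ∀ l, a j l ≤ a k l := fun l => hle (Sum.inl l)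
  have hNle : ∀ b i, (- Lint W b i (u j)).toNat ≤ (- Lint W b i (u k)).toNat :=
    fun b i => hle (Sum.inr (b, i))
  -- the complement
  set w : Fin m ⊕ Fin n → ℤ := ∑ l, (a k l - a j l) • ms l with hwdef
  have hw : u j + w = u k := by
    rw [ha j, ha k, hwdef, ← Finset.sum_add_distrib]
    apply Finset.sum_congr rfl
    intro l _
    rw [← add_smul]
    congr 1
    have := hale l
    omega
  have hwM : w ∈ M := (mem_closure_iff_rep ms w).mpr ⟨_, rfl⟩
  have hwne0 : w ≠ 0 := by
    intro h
    rw [h, add_zero] at hw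
    exact hujk hw
  -- the Minkowski decomposition
  have hcast : (fun i => ((u j i : ℤ) : ℝ)) + (fun i => ((w i : ℤ) : ℝ))
      = fun i => ((u k i : ℤ) : ℝ) := by
    funext i
    rw [Pi.add_apply, ← hw, Pi.add_apply]
    push_cast
    ring
  have hdecomp : Pset (Vr W) (fun i => ((u k i : ℤ) : ℝ)) =
      Pset (Vr W) (fun i => ((u j i : ℤ) : ℝ)) + Pset (Vr W) (fun i => ((w i : ℤ) : ℝ)) := by
    rw [← hcast]
    apply Pset_decomp (Vr W) hV
    intro b hb
    obtain ⟨hbunit, hbfeas⟩ := hb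
    have hdetZ : (W.submatrix b id).det ≠ 0 := (isUnit_det_Vr_iff W b).mp hbunit
    rw [hcast] at hbfeas
    have hk : ∀ i, Lint W b i (u k) ≤ 0 := (feas_iff_Lint W b hdetZ (u k)).mp hbfeas
    have hj : ∀ i, Lint W b i (u j) ≤ 0 := by
      intro i
      have h1 : σ j (b, i) = σ k (b, i) := by rw [hσj, hσk]
      have h2 : σ k (b, i) = true := by
        rw [hσdef]
        simp only [decide_eq_true_eq]
        exact hk i
      rw [h2] at h1
      have := of_decide_eq_true h1
      exact this
    have hwneg : ∀ i, Lint W b i w ≤ 0 := by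
      intro i
      have hadd : Lint W b i (u k) = Lint W b i (u j) + Lint W b i w := by
        rw [← hw, Lint_add]
      have h1 : - Lint W b i (u j) ≤ - Lint W b i (u k) := by
        have h2 := hNle b i
        have h3 : (0:ℤ) ≤ - Lint W b i (u j) := by linarith [hj i]
        have h4 : (0:ℤ) ≤ - Lint W b i (u k) := by linarith [hk i]
        omega
      linarith [hadd]
    exact ⟨(feas_iff_Lint W b hdetZ (u j)).mpr hj, (feas_iff_Lint W b hdetZ w).mpr hwneg⟩
  -- contradiction with indecomposability of u k
  apply huind k
  refine ⟨u j, w, humem j, hwM, hjne0, hwne0, hw.symm, ?_⟩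
  calc polyOf W (u k) = Pset (Vr W) (fun i => ((u k i : ℤ) : ℝ)) := rfl
    _ = Pset (Vr W) (fun i => ((u j i : ℤ) : ℝ)) + Pset (Vr W) (fun i => ((w i : ℤ) : ℝ)) :=
        hdecomp
    _ = polyOf W (u j) + polyOf W w := rfl
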